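/- arXiv:1307.7993 — 3 statements merged into one kernel-verified Lean document; each statement's English description precedes it below -/
import Mathlib

section
/- Let n, p, K ≥ 1, let X^(1),…,X^(K) ∈ ℝ^{n×p}, Y^(1),…,Y^(K) ∈ ℝ^n, and λ > 0, and define the objective F(B) := (1/(2n)) Σ_{k=1}^K ‖Y^(k) − X^(k) β^(k)‖₂² + λ Σ_{j=1}^p ‖B_j‖₂ for B ∈ ℝ^{p×K}, where β^(k) is the k-th column and B_j the j-th row of B. Suppose B̂ ∈ ℝ^{p×K} is a global minimizer of F and Ẑ ∈ ℝ^{p×K} satisfies: (i) for every j ∈ {1,…,p} and k ∈ {1,…,K}, (1/n)·((X^(k))ᵀ(X^(k) β̂^(k) − Y^(k)))_j + λ Ẑ_{jk} = 0; (ii) ‖Ẑ_j‖₂ ≤ 1 for every row j; (iii) ⟨Ẑ_j, B̂_j⟩ = ‖B̂_j‖₂ for every row j. If Ω ⊆ {1,…,p} is a set of indices with ‖Ẑ_j‖₂ < 1 for all j ∈ Ω, then every global minimizer B̃ of F satisfies B̃_j = 0 for all j ∈ Ω. -/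
open Matrix Finset

/-- The `l1/l2`-regularized multi-task Lasso objective
`F(B) = (1/(2n)) Σ_k ‖Y^(k) − X^(k) β^(k)‖₂² + λ Σ_j ‖B_j‖₂`. -/
noncomputable def lassoObj {n p K : ℕ} (X : Fin K → Matrix (Fin n) (Fin p) ℝ)
    (Y : Fin K → Fin n → ℝ) (lam : ℝ) (B : Matrix (Fin p) (Fin K) ℝ) : ℝ :=
  (1 / (2 * (n : ℝ))) *
      ∑ k, ∑ i, (Y k i - ((X k) *ᵥ fun j => B j k) i) ^ 2 +
    lam * ∑ j, Real.sqrt (∑ k, (B j k) ^ 2)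

lemma cs_fin {K : ℕ} (x y : Fin K → ℝ) :
    ∑ k, x k * y k ≤ Real.sqrt (∑ k, (x k) ^ 2) * Real.sqrt (∑ k, (y k) ^ 2) := by
  have h := sum_mul_sq_le_sq_mul_sq Finset.univ x y
  calc ∑ k, x k * y k ≤ |∑ k, x k * y k| := le_abs_self _
    _ = Real.sqrt ((∑ k, x k * y k) ^ 2) := (Real.sqrt_sq_eq_abs _).symm
    _ ≤ Real.sqrt ((∑ k, (x k) ^ 2) * ∑ k, (y k) ^ 2) := Real.sqrt_le_sqrt h
    _ = _ := Real.sqrt_mul (by positivity) _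

lemma tri_fin {K : ℕ} (x y : Fin K → ℝ) :
    Real.sqrt (∑ k, (x k + y k) ^ 2) ≤
      Real.sqrt (∑ k, (x k) ^ 2) + Real.sqrt (∑ k, (y k) ^ 2) := by
  have hx : (0:ℝ) ≤ ∑ k, (x k) ^ 2 := by positivity
  have hy : (0:ℝ) ≤ ∑ k, (y k) ^ 2 := by positivity
  have key : ∑ k, (x k + y k) ^ 2 ≤
      (Real.sqrt (∑ k, (x k) ^ 2) + Real.sqrt (∑ k, (y k) ^ 2)) ^ 2 := by
    have hcs := cs_fin x y
    have e : ∑ k, (x k + y k) ^ 2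
        = ∑ k, (x k) ^ 2 + 2 * ∑ k, x k * y k + ∑ k, (y k) ^ 2 := by
      rw [Finset.sum_congr rfl (fun k _ => by ring :
        ∀ k ∈ Finset.univ, (x k + y k) ^ 2 = (x k) ^ 2 + 2 * (x k * y k) + (y k) ^ 2)]
      rw [Finset.sum_add_distrib, Finset.sum_add_distrib, ← Finset.mul_sum]
    rw [e, add_sq, Real.sq_sqrt hx, Real.sq_sqrt hy]
    nlinarith [hcs]
  calc Real.sqrt (∑ k, (x k + y k) ^ 2)
      ≤ Real.sqrt ((Real.sqrt (∑ k, (x k) ^ 2) + Real.sqrt (∑ k, (y k) ^ 2)) ^ 2) :=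
        Real.sqrt_le_sqrt key
    _ = _ := Real.sqrt_sq (by positivity)

theorem stmt4 {n p K : ℕ} (hn : 0 < n) (hp : 0 < p) (hK : 0 < K)
    (X : Fin K → Matrix (Fin n) (Fin p) ℝ) (Y : Fin K → Fin n → ℝ)
    (lam : ℝ) (hlam : 0 < lam)
    (Bh Zh : Matrix (Fin p) (Fin K) ℝ)
    (hBh : ∀ B, lassoObj X Y lam Bh ≤ lassoObj X Y lam B)
    (hstat : ∀ j k,
      (1 / (n : ℝ)) * (((X k)ᵀ *ᵥ (((X k) *ᵥ fun j' => Bh j' k) - Y k)) j) +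
        lam * Zh j k = 0)
    (hdualfeas : ∀ j, Real.sqrt (∑ k, (Zh j k) ^ 2) ≤ 1)
    (halign : ∀ j, (∑ k, Zh j k * Bh j k) = Real.sqrt (∑ k, (Bh j k) ^ 2))
    (Ω : Set (Fin p)) (hΩ : ∀ j ∈ Ω, Real.sqrt (∑ k, (Zh j k) ^ 2) < 1) :
    ∀ Bt : Matrix (Fin p) (Fin K) ℝ,
      (∀ B, lassoObj X Y lam Bt ≤ lassoObj X Y lam B) →
      ∀ j ∈ Ω, Bt j = 0 := by
  intro Bt hBt
  have hnR : (0:ℝ) < (n:ℝ) := by exact_mod_cast hn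
  have hval : lassoObj X Y lam Bh = lassoObj X Y lam Bt :=
    le_antisymm (hBh Bt) (hBt Bh)
  -- midpoint
  set M : Matrix (Fin p) (Fin K) ℝ := fun j k => (Bh j k + Bt j k) / 2 with hM
  have fitM : ∀ k i, ((X k) *ᵥ fun j' => M j' k) i =
      (((X k) *ᵥ fun j' => Bh j' k) i + ((X k) *ᵥ fun j' => Bt j' k) i) / 2 := by
    intro k i
    simp only [Matrix.mulVec, dotProduct, hM]
    rw [← Finset.sum_add_distrib, Finset.sum_div]
    exact Finset.sum_congr rfl fun j _ => by ring
  -- fitted values coincide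
  have hfit : ∀ k i, ((X k) *ᵥ fun j' => Bh j' k) i = ((X k) *ᵥ fun j' => Bt j' k) i := by
    have hsm : ∑ k, ∑ i, (Y k i - ((X k) *ᵥ fun j' => M j' k) i) ^ 2 =
        (∑ k, ∑ i, (Y k i - ((X k) *ᵥ fun j' => Bh j' k) i) ^ 2 +
          ∑ k, ∑ i, (Y k i - ((X k) *ᵥ fun j' => Bt j' k) i) ^ 2) / 2 -
        ∑ k, ∑ i, ((((X k) *ᵥ fun j' => Bh j' k) i - ((X k) *ᵥ fun j' => Bt j' k) i) / 2) ^ 2 := by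
      simp only [← Finset.sum_add_distrib, Finset.sum_div, ← Finset.sum_sub_distrib]
      refine Finset.sum_congr rfl fun k _ => Finset.sum_congr rfl fun i _ => ?_
      rw [fitM]; ring
    have hpen : ∑ j, Real.sqrt (∑ k, (M j k) ^ 2) ≤
        (∑ j, Real.sqrt (∑ k, (Bh j k) ^ 2) + ∑ j, Real.sqrt (∑ k, (Bt j k) ^ 2)) / 2 := by
      simp only [← Finset.sum_add_distrib, Finset.sum_div]
      refine Finset.sum_le_sum fun j _ => ?_
      have := tri_fin (fun k => Bh j k / 2) (fun k => Bt j k / 2)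
      have e1 : ∑ k, (Bh j k / 2 + Bt j k / 2) ^ 2 = ∑ k, (M j k) ^ 2 :=
        Finset.sum_congr rfl fun k _ => by simp [hM]; ring
      have e2 : ∑ k, (Bh j k / 2) ^ 2 = (∑ k, (Bh j k) ^ 2) / 4 := by
        rw [Finset.sum_div]; exact Finset.sum_congr rfl fun k _ => by ring
      have e3 : ∑ k, (Bt j k / 2) ^ 2 = (∑ k, (Bt j k) ^ 2) / 4 := by
        rw [Finset.sum_div]; exact Finset.sum_congr rfl fun k _ => by ring
      have s2 : ∀ t : ℝ, 0 ≤ t → Real.sqrt (t / 4) = Real.sqrt t / 2 := by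
        intro t ht
        rw [show t / 4 = t * (1/2)^2 by ring, Real.sqrt_mul ht, Real.sqrt_sq (by norm_num)]
        ring
      rw [e1, e2, e3, s2 _ (by positivity), s2 _ (by positivity)] at this
      linarith
    set Q := ∑ k, ∑ i,
        ((((X k) *ᵥ fun j' => Bh j' k) i - ((X k) *ᵥ fun j' => Bt j' k) i) / 2) ^ 2 with hQ
    have hQ0 : (0:ℝ) ≤ Q := by positivity
    have hFM : lassoObj X Y lam M ≤
        (lassoObj X Y lam Bh + lassoObj X Y lam Bt) / 2 - (1 / (2 * (n:ℝ))) * Q := by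
      unfold lassoObj
      rw [hsm]
      have h1 : (0:ℝ) < 1 / (2 * (n:ℝ)) := by positivity
      have := mul_le_mul_of_nonneg_left hpen hlam.le
      nlinarith [this]
    have hle := hBh M
    rw [hval] at hFM
    have : (1 / (2 * (n:ℝ))) * Q ≤ 0 := by
      rw [hval] at hle; linarith
    have hQz : Q = 0 := le_antisymm (by nlinarith [hQ0, this, (by positivity : (0:ℝ) < 1 / (2*(n:ℝ)))]) hQ0
    intro k i
    have h1 := (Finset.sum_eq_zero_iff_of_nonneg (fun k _ => by positivity)).mp hQz k (Finset.mem_univ k)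
    have h2 := (Finset.sum_eq_zero_iff_of_nonneg (fun i _ => by positivity)).mp h1 i (Finset.mem_univ i)
    have := pow_eq_zero_iff (n := 2) (by norm_num) |>.mp h2
    have := div_eq_zero_iff.mp this
    rcases this with h | h
    · linarith [sub_eq_zero.mp h]
    · norm_num at h
  -- residual / dual algebra
  have hz : ∀ j k, lam * Zh j k =
      -(1/(n:ℝ)) * ∑ i, X k i j * (((X k) *ᵥ fun j' => Bh j' k) i - Y k i) := by
    intro j k
    have h := hstat j k
    simp only [Matrix.mulVec, dotProduct, Matrix.transpose_apply, Pi.sub_apply] at h ⊢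
    linarith
  have hdiff : ∀ k i, ∑ j, X k i j * (Bt j k - Bh j k) = 0 := by
    intro k i
    have e : ∑ j, X k i j * (Bt j k - Bh j k) =
        ((X k) *ᵥ fun j' => Bt j' k) i - ((X k) *ᵥ fun j' => Bh j' k) i := by
      simp only [Matrix.mulVec, dotProduct, mul_sub, Finset.sum_sub_distrib]
    rw [e, hfit k i, sub_self]
  have key2 : ∀ k, ∑ j, lam * Zh j k * (Bt j k - Bh j k) = 0 := by
    intro k
    calc ∑ j, lam * Zh j k * (Bt j k - Bh j k)
        = ∑ j, ∑ i, -(1/(n:ℝ)) *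
            ((((X k) *ᵥ fun j' => Bh j' k) i - Y k i) * (X k i j * (Bt j k - Bh j k))) := by
          refine Finset.sum_congr rfl fun j _ => ?_
          rw [hz j k, Finset.mul_sum, Finset.sum_mul]
          exact Finset.sum_congr rfl fun i _ => by ring
      _ = ∑ i, ∑ j, -(1/(n:ℝ)) *
            ((((X k) *ᵥ fun j' => Bh j' k) i - Y k i) * (X k i j * (Bt j k - Bh j k))) :=
          Finset.sum_comm
      _ = 0 := by
          refine Finset.sum_eq_zero fun i _ => ?_
          have : ∑ j, X k i j * (Bt j k - Bh j k) = 0 := hdiff k i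
          calc ∑ j, -(1/(n:ℝ)) *
                ((((X k) *ᵥ fun j' => Bh j' k) i - Y k i) * (X k i j * (Bt j k - Bh j k)))
              = -(1/(n:ℝ)) * ((((X k) *ᵥ fun j' => Bh j' k) i - Y k i) *
                  ∑ j, X k i j * (Bt j k - Bh j k)) := by
                rw [Finset.mul_sum, Finset.mul_sum]
            _ = 0 := by rw [this]; ring
  have hZBt_eq : ∑ j, ∑ k, Zh j k * Bt j k = ∑ j, ∑ k, Zh j k * Bh j k := by
    have h0 : ∑ k, ∑ j, lam * Zh j k * (Bt j k - Bh j k) = 0 :=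
      Finset.sum_eq_zero fun k _ => key2 k
    rw [Finset.sum_comm] at h0
    have h1 : lam * (∑ j, ∑ k, Zh j k * Bt j k - ∑ j, ∑ k, Zh j k * Bh j k) = 0 := by
      calc lam * (∑ j, ∑ k, Zh j k * Bt j k - ∑ j, ∑ k, Zh j k * Bh j k)
          = ∑ j, ∑ k, lam * Zh j k * (Bt j k - Bh j k) := by
            rw [mul_sub, Finset.mul_sum, Finset.mul_sum, ← Finset.sum_sub_distrib]
            refine Finset.sum_congr rfl fun j _ => ?_
            rw [Finset.mul_sum, Finset.mul_sum, ← Finset.sum_sub_distrib]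
            exact Finset.sum_congr rfl fun k _ => by ring
        _ = 0 := h0
    rcases mul_eq_zero.mp h1 with h | h
    · exact absurd h hlam.ne'
    · linarith [sub_eq_zero.mp h]
  -- penalty equality
  have hS : ∑ j, Real.sqrt (∑ k, (Bt j k) ^ 2) = ∑ j, Real.sqrt (∑ k, (Bh j k) ^ 2) := by
    have hsm_eq : ∑ k, ∑ i, (Y k i - ((X k) *ᵥ fun j' => Bh j' k) i) ^ 2 =
        ∑ k, ∑ i, (Y k i - ((X k) *ᵥ fun j' => Bt j' k) i) ^ 2 :=
      Finset.sum_congr rfl fun k _ => Finset.sum_congr rfl fun i _ => by rw [hfit]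
    have h := hval
    unfold lassoObj at h
    rw [hsm_eq] at h
    have h2 : lam * ∑ j, Real.sqrt (∑ k, (Bh j k) ^ 2) =
        lam * ∑ j, Real.sqrt (∑ k, (Bt j k) ^ 2) := by linarith
    exact (mul_left_cancel₀ hlam.ne' h2).symm
  have hsum0 : ∑ j, (Real.sqrt (∑ k, (Bt j k) ^ 2) - ∑ k, Zh j k * Bt j k) = 0 := by
    rw [Finset.sum_sub_distrib, hS, hZBt_eq,
      show (∑ j, ∑ k, Zh j k * Bh j k) = ∑ j, Real.sqrt (∑ k, (Bh j k) ^ 2) from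
        Finset.sum_congr rfl fun j _ => halign j, sub_self]
  have hnonneg : ∀ j ∈ Finset.univ,
      (0:ℝ) ≤ Real.sqrt (∑ k, (Bt j k) ^ 2) - ∑ k, Zh j k * Bt j k := by
    intro j _
    have hcs := cs_fin (fun k => Zh j k) (fun k => Bt j k)
    have hd := hdualfeas j
    have hb : (0:ℝ) ≤ Real.sqrt (∑ k, (Bt j k) ^ 2) := Real.sqrt_nonneg _
    nlinarith
  have hterm := (Finset.sum_eq_zero_iff_of_nonneg hnonneg).mp hsum0
  intro j hj
  have h0 := hterm j (Finset.mem_univ j)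
  have hcs := cs_fin (fun k => Zh j k) (fun k => Bt j k)
  have hlt := hΩ j hj
  have hb : (0:ℝ) ≤ Real.sqrt (∑ k, (Bt j k) ^ 2) := Real.sqrt_nonneg _
  have hzero : Real.sqrt (∑ k, (Bt j k) ^ 2) = 0 := by nlinarith
  have hsz : ∑ k, (Bt j k) ^ 2 = 0 := by
    have := Real.sqrt_eq_zero'.mp hzero
    have h2 : (0:ℝ) ≤ ∑ k, (Bt j k) ^ 2 := by positivity
    linarith
  funext k
  have := (Finset.sum_eq_zero_iff_of_nonneg (fun k _ => sq_nonneg (Bt j k))).mp hsz k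
    (Finset.mem_univ k)
  simpa using pow_eq_zero_iff (n := 2) (by norm_num) |>.mp this
end

section
/- Let d ≥ 1 and let ξ₁,…,ξ_d be independent standard Gaussian random variables (i.e., the coordinate functions on (Fin d → ℝ) equipped with the d-fold product of the standard Gaussian measure N(0,1)). Then for every real t > d, P( Σ_{i=1}^d ξ_i² ≥ 2t ) ≤ exp( −t(1 − 2√(d/t)) ). -/
open MeasureTheory ProbabilityTheory Real
open scoped ENNReal NNReal

lemma gaussPDF_mul_exp (l x : ℝ) :
    gaussianPDFReal 0 1 x * Real.exp (l * x ^ 2)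
      = (Real.sqrt (2 * π))⁻¹ * Real.exp (-(1 / 2 - l) * x ^ 2) := by
  simp only [gaussianPDFReal, NNReal.coe_one, mul_one, sub_zero, one_div]
  rw [mul_assoc, ← Real.exp_add]
  congr 2
  ring

lemma gauss_sq_exp {l : ℝ} (hl : l < 1 / 2) :
    Integrable (fun x => Real.exp (l * x ^ 2)) (gaussianReal 0 1) ∧
    ∫ x, Real.exp (l * x ^ 2) ∂(gaussianReal 0 1) = Real.sqrt (1 - 2 * l)⁻¹ := by
  have hb : (0 : ℝ) < 1 / 2 - l := by linarith
  have hrw : gaussianReal 0 1 = volume.withDensity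
      (fun x => ((gaussianPDFReal 0 1 x).toNNReal : ℝ≥0∞)) := by
    rw [gaussianReal_of_var_ne_zero _ one_ne_zero]; rfl
  have hmeas : Measurable fun x => (gaussianPDFReal 0 1 x).toNNReal :=
    (measurable_gaussianPDFReal 0 1).real_toNNReal
  have hsmul : ∀ x : ℝ, (gaussianPDFReal 0 1 x).toNNReal • Real.exp (l * x ^ 2)
      = (Real.sqrt (2 * π))⁻¹ * Real.exp (-(1 / 2 - l) * x ^ 2) := by
    intro x
    rw [NNReal.smul_def, smul_eq_mul, Real.coe_toNNReal _ (gaussianPDFReal_nonneg 0 1 x),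
      gaussPDF_mul_exp]
  constructor
  · rw [hrw, integrable_withDensity_iff_integrable_smul hmeas]
    simp_rw [hsmul]
    exact (integrable_exp_neg_mul_sq hb).const_mul _
  · rw [hrw, integral_withDensity_eq_integral_smul hmeas]
    simp_rw [hsmul]
    rw [integral_const_mul, integral_gaussian]
    rw [← Real.sqrt_inv, ← Real.sqrt_mul (by positivity)]
    have hπ : π ≠ 0 := Real.pi_ne_zero
    have h2l : (1 : ℝ) - 2 * l ≠ 0 := by linarith
    congr 1
    rw [show (1:ℝ)/2 - l = (1 - 2*l)/2 by ring, div_div_eq_mul_div, div_eq_mul_inv,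
      ← mul_assoc, show (2*π)⁻¹ * (π*2) = 1 from by
        rw [mul_comm π 2]; exact inv_mul_cancel₀ (mul_ne_zero two_ne_zero hπ), one_mul]

lemma pi_gauss_sq_exp (d : ℕ) {l : ℝ} (hl : l < 1 / 2) :
    Integrable (fun ξ : Fin d → ℝ => Real.exp (l * ∑ i, (ξ i) ^ 2))
      (Measure.pi fun _ : Fin d => gaussianReal 0 1) ∧
    ∫ ξ : Fin d → ℝ, Real.exp (l * ∑ i, (ξ i) ^ 2)
        ∂(Measure.pi fun _ : Fin d => gaussianReal 0 1)
      = (Real.sqrt (1 - 2 * l)⁻¹) ^ d := by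
  letI : MeasureSpace ℝ := ⟨gaussianReal 0 1⟩
  haveI : SigmaFinite (volume : Measure ℝ) :=
    (inferInstance : SigmaFinite (gaussianReal 0 1))
  have hfun : ∀ ξ : Fin d → ℝ,
      Real.exp (l * ∑ i, (ξ i) ^ 2) = ∏ i, Real.exp (l * (ξ i) ^ 2) := by
    intro ξ; rw [← Real.exp_sum, Finset.mul_sum]
  have hvol : (Measure.pi fun _ : Fin d => gaussianReal 0 1)
      = (volume : Measure (Fin d → ℝ)) := rfl
  constructor
  · rw [hvol]
    simp_rw [hfun]
    exact Integrable.fintype_prod (fun _ => (gauss_sq_exp hl).1)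
  · rw [hvol]
    simp_rw [hfun]
    rw [show ∫ ξ : Fin d → ℝ, ∏ i, Real.exp (l * (ξ i) ^ 2) = (∫ x : ℝ, Real.exp (l * x ^ 2)) ^ Fintype.card (Fin d) from integral_fintype_prod_eq_pow (fun x : ℝ => Real.exp (l * x ^ 2))]
    rw [show ∫ x : ℝ, Real.exp (l * x ^ 2) = Real.sqrt (1 - 2 * l)⁻¹ from (gauss_sq_exp hl).2]
    simp

theorem stmt6 (d : ℕ) (hd : 0 < d) (t : ℝ) (ht : (d : ℝ) < t) :
    (Measure.pi fun _ : Fin d => gaussianReal 0 1)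
        {ξ : Fin d → ℝ | 2 * t ≤ ∑ i, (ξ i) ^ 2} ≤
      ENNReal.ofReal (Real.exp (-t * (1 - 2 * Real.sqrt ((d : ℝ) / t)))) := by
  have hd0 : (0 : ℝ) < d := by exact_mod_cast hd
  have ht0 : (0 : ℝ) < t := lt_trans hd0 ht
  have hdt : (0 : ℝ) < (d : ℝ) / t := by positivity
  have hdt1 : (d : ℝ) / t < 1 := (div_lt_one ht0).mpr ht
  set s : ℝ := Real.sqrt ((d : ℝ) / t) with hs_def
  have hs_pos : 0 < s := Real.sqrt_pos.mpr hdt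
  have hs_lt : s < 1 := by
    rw [hs_def]
    calc Real.sqrt ((d:ℝ)/t) < Real.sqrt 1 := Real.sqrt_lt_sqrt hdt.le hdt1
      _ = 1 := Real.sqrt_one
  set l : ℝ := (1 - s) / 2 with hl_def
  have hl : l < 1 / 2 := by rw [hl_def]; linarith
  have hl0 : 0 ≤ l := by rw [hl_def]; linarith
  have h1 : 1 - 2 * l = s := by rw [hl_def]; ring
  set μ := Measure.pi fun _ : Fin d => gaussianReal 0 1 with hμ
  haveI : IsProbabilityMeasure μ := MeasureTheory.Measure.pi.instIsProbabilityMeasure _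
  have hint := (pi_gauss_sq_exp d hl).1
  have hval := (pi_gauss_sq_exp d hl).2
  have hcher := measure_ge_le_exp_mul_mgf (μ := μ)
    (X := fun ξ : Fin d → ℝ => ∑ i, (ξ i) ^ 2) (2 * t) hl0 hint
  rw [mgf] at hcher
  rw [hval, h1] at hcher
  -- the real-number bound
  set u : ℝ := Real.sqrt (t / d) with hu_def
  have hu_pos : 0 < u := Real.sqrt_pos.mpr (by positivity)
  have hu2 : u * u = t / d := Real.mul_self_sqrt (by positivity)
  have hsu : s * u = 1 := by
    rw [hs_def, hu_def, ← Real.sqrt_mul hdt.le]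
    rw [show (d : ℝ) / t * (t / d) = 1 by field_simp]
    exact Real.sqrt_one
  have hsinv : s⁻¹ = u := by
    field_simp at hsu ⊢
    linarith [hsu]
  have hloupos : 0 < Real.sqrt u := Real.sqrt_pos.mpr hu_pos
  have hpow : (Real.sqrt s⁻¹) ^ d = Real.exp ((d : ℝ) * Real.log (Real.sqrt u)) := by
    rw [hsinv, Real.exp_nat_mul, Real.exp_log hloupos]
  have hlog : Real.log (Real.sqrt u) ≤ u / 2 := by
    have := Real.log_le_sub_one_of_pos hloupos
    have h2 : Real.sqrt u ≤ u ∨ True := Or.inr trivial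
    have hsq : Real.sqrt u * Real.sqrt u = u := Real.mul_self_sqrt hu_pos.le
    nlinarith [Real.sq_sqrt hu_pos.le, Real.sqrt_nonneg u,
      Real.log_le_sub_one_of_pos hloupos]
  have hts : (d : ℝ) / 2 * u ≤ t * s := by
    have hfac : t * s - (d : ℝ) / 2 * u = (t / 2) / u := by
      have hu2' : (d : ℝ) * (u * u) = t := by rw [hu2]; field_simp
      rw [eq_div_iff hu_pos.ne']
      linear_combination t * hsu - (1 / 2) * hu2'
    have : (0 : ℝ) < (t / 2) / u := by positivity
    linarith
  have hreal : Real.exp (-l * (2 * t)) * (Real.sqrt s⁻¹) ^ d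
      ≤ Real.exp (-t * (1 - 2 * s)) := by
    rw [hpow, ← Real.exp_add, Real.exp_le_exp]
    have h3 : (d : ℝ) * Real.log (Real.sqrt u) ≤ (d : ℝ) * (u / 2) := by
      exact mul_le_mul_of_nonneg_left hlog hd0.le
    rw [hl_def]
    nlinarith [hts, h3]
  calc μ {ξ : Fin d → ℝ | 2 * t ≤ ∑ i, (ξ i) ^ 2}
      = ENNReal.ofReal (μ {ξ : Fin d → ℝ | 2 * t ≤ ∑ i, (ξ i) ^ 2}).toReal := by
        rw [ENNReal.ofReal_toReal (measure_ne_top _ _)]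
    _ ≤ ENNReal.ofReal (Real.exp (-l * (2 * t)) * (Real.sqrt s⁻¹) ^ d) :=
        ENNReal.ofReal_le_ofReal hcher
    _ ≤ ENNReal.ofReal (Real.exp (-t * (1 - 2 * s))) := ENNReal.ofReal_le_ofReal hreal
end

section
/- Let n, s, m ≥ 1, λ ≠ 0, X_S ∈ ℝ^{n×s}, X_{S^c} ∈ ℝ^{n×m}, and W ∈ ℝ^n. Suppose Σ̂ := (1/n) X_Sᵀ X_S is invertible and set Π := (1/n) X_S Σ̂^{-1} X_Sᵀ. Suppose β̂, β* ∈ ℝ^s, ẑ_S ∈ ℝ^s, and ẑ_{S^c} ∈ ℝ^m satisfy the two equations Σ̂(β̂ − β*) − (1/n) X_Sᵀ W = −λ ẑ_S and (1/n) X_{S^c}ᵀ X_S (β̂ − β*) − (1/n) X_{S^c}ᵀ W = −λ ẑ_{S^c}. Then ẑ_{S^c} = −(1/(λn)) X_{S^c}ᵀ (Π − I_n) W + (1/n) X_{S^c}ᵀ X_S Σ̂^{-1} ẑ_S. -/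
open Matrix

theorem stmt9 {n s m : ℕ} (hn : 0 < n) (hs : 0 < s) (hm : 0 < m)
    (lam : ℝ) (hlam : lam ≠ 0)
    (XS : Matrix (Fin n) (Fin s) ℝ) (Xc : Matrix (Fin n) (Fin m) ℝ)
    (W : Fin n → ℝ)
    (Sig : Matrix (Fin s) (Fin s) ℝ)
    (hSig : Sig = (1 / (n : ℝ)) • (XSᵀ * XS))
    (hInv : IsUnit Sig.det)
    (Pi : Matrix (Fin n) (Fin n) ℝ)
    (hPi : Pi = (1 / (n : ℝ)) • (XS * Sig⁻¹ * XSᵀ))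
    (bh bs zS : Fin s → ℝ) (zc : Fin m → ℝ)
    (h1 : Sig *ᵥ (bh - bs) - (1 / (n : ℝ)) • (XSᵀ *ᵥ W) = -(lam • zS))
    (h2 : (1 / (n : ℝ)) • ((Xcᵀ * XS) *ᵥ (bh - bs)) - (1 / (n : ℝ)) • (Xcᵀ *ᵥ W) =
      -(lam • zc)) :
    zc = (-(1 / (lam * n))) • (Xcᵀ *ᵥ ((Pi - 1) *ᵥ W)) +
        (1 / (n : ℝ)) • ((Xcᵀ * XS * Sig⁻¹) *ᵥ zS) := by
  have hn' : (n : ℝ) ≠ 0 := Nat.cast_ne_zero.mpr hn.ne'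
  have hA : Sig⁻¹ * Sig = 1 := nonsing_inv_mul Sig hInv
  set d := bh - bs with hdd
  have hSd : Sig *ᵥ d = (1 / (n : ℝ)) • (XSᵀ *ᵥ W) - lam • zS := by
    have := h1
    linear_combination (norm := module) this
  have hd : d = Sig⁻¹ *ᵥ ((1 / (n : ℝ)) • (XSᵀ *ᵥ W) - lam • zS) := by
    rw [← hSd, Matrix.mulVec_mulVec, hA, Matrix.one_mulVec]
  have hzc : lam • zc = (1 / (n : ℝ)) • (Xcᵀ *ᵥ W) - (1 / (n : ℝ)) • ((Xcᵀ * XS) *ᵥ d) := by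
    linear_combination (norm := module) h2
  have key : (Xcᵀ * XS) *ᵥ d =
      (1 / (n : ℝ)) • ((Xcᵀ * XS * Sig⁻¹ * XSᵀ) *ᵥ W) - lam • ((Xcᵀ * XS * Sig⁻¹) *ᵥ zS) := by
    simp [hd, Matrix.mulVec_sub, Matrix.mulVec_smul, Matrix.mulVec_mulVec, Matrix.mul_assoc]
  have hproj : Xcᵀ *ᵥ ((Pi - 1) *ᵥ W) =
      (1 / (n : ℝ)) • ((Xcᵀ * XS * Sig⁻¹ * XSᵀ) *ᵥ W) - Xcᵀ *ᵥ W := by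
    simp [hPi, Matrix.sub_mulVec, Matrix.one_mulVec, Matrix.mulVec_sub,
      Matrix.smul_mulVec, Matrix.mulVec_smul, Matrix.mulVec_mulVec, Matrix.mul_assoc]
  have hzc2 : lam • zc = lam • ((-(1 / (lam * n))) • (Xcᵀ *ᵥ ((Pi - 1) *ᵥ W)) +
      (1 / (n : ℝ)) • ((Xcᵀ * XS * Sig⁻¹) *ᵥ zS)) := by
    rw [hzc, key, hproj]
    match_scalars <;> field_simp <;> ring
  exact smul_right_injective _ hlam hzc2
end
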